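/- Let (Z_n) satisfy Z_{n+1} = θ W̃_{n+1} + U_n Z_n where U_n = (1-η_n)(1 + η_n(Z_n^2-1))^{-1/2}. If Z_n^2 ≤ η_n^{-γ} with γ ∈ (0, 2/3) and η_n ∈ (0,1), then 1 - c_1 η_n^{1-γ} ≤ U_n ≤ 1, where c_1 = 2 sup_n (1-η_n)^{-1/2}. -/
import Mathlib


/-- If `Z (n+1) = θ * W (n+1) + U n * Z n` with
`U n = (1 - η n) * (1 + η n * (Z n ^ 2 - 1))^{-1/2}`, `η n ∈ (0,1)`, and
`Z n ^ 2 ≤ η n ^ (-γ)` for some `γ ∈ (0, 2/3)`, then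
`1 - c₁ * η n ^ (1-γ) ≤ U n ≤ 1` where `c₁ = 2 * sup_n (1 - η n)^{-1/2}`. -/
theorem am_multiplicative_factor_bound (η Z W U : ℕ → ℝ) (θ γ c₁ : ℝ)
    (hη : ∀ n, 0 < η n ∧ η n < 1)
    (hθ : 0 < θ)
    (hγ : 0 < γ ∧ γ < 2/3)
    (hU : ∀ n, U n = (1 - η n) / Real.sqrt (1 + η n * (Z n ^ 2 - 1)))
    (hZ : ∀ n, Z (n + 1) = θ * W (n + 1) + U n * Z n)
    (hbdd : BddAbove (Set.range fun n => (1 - η n) ^ (-(1/2) : ℝ)))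
    (hc₁ : c₁ = 2 * ⨆ n, (1 - η n) ^ (-(1/2) : ℝ)) :
    ∀ n, Z n ^ 2 ≤ η n ^ (-γ) →
      1 - c₁ * η n ^ (1 - γ) ≤ U n ∧ U n ≤ 1 := by
  intro n hZn
  obtain ⟨hη0, hη1⟩ := hη n
  set s : ℝ := 1 + η n * (Z n ^ 2 - 1) with hs
  set b : ℝ := 1 - η n with hbdef
  have hb : 0 < b := by simp [hbdef]; linarith
  have hZsq : (0:ℝ) ≤ Z n ^ 2 := sq_nonneg _
  have hsb : b ≤ s := by
    have : s - b = η n * Z n ^ 2 := by ring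
    nlinarith
  have hs0 : 0 < s := lt_of_lt_of_le hb hsb
  set a : ℝ := Real.sqrt s with hadef
  set r : ℝ := Real.sqrt b with hrdef
  have ha0 : 0 < a := Real.sqrt_pos.mpr hs0
  have hr0 : 0 < r := Real.sqrt_pos.mpr hb
  have ha2 : a ^ 2 = s := Real.sq_sqrt hs0.le
  have hr2 : r ^ 2 = b := Real.sq_sqrt hb.le
  have har : r ≤ a := Real.sqrt_le_sqrt hsb
  have hrb : b ≤ r := by nlinarith
  -- t := η^(1-γ)
  set t : ℝ := η n ^ (1 - γ) with htdef
  have ht0 : 0 < t := Real.rpow_pos_of_pos hη0 _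
  have htη : η n ≤ t := by
    have := Real.rpow_le_rpow_of_exponent_ge hη0 hη1.le (by linarith [hγ.2] : 1 - γ ≤ 1)
    simpa [Real.rpow_one] using this
  have hmul : η n * η n ^ (-γ) = t := by
    rw [htdef, sub_eq_add_neg, Real.rpow_add hη0, Real.rpow_one]
  have hst : s ≤ 1 + t := by
    have h1 : η n * Z n ^ 2 ≤ η n * η n ^ (-γ) := by
      exact mul_le_mul_of_nonneg_left hZn hη0.le
    rw [hmul] at h1
    have : s = 1 - η n + η n * Z n ^ 2 := by ring
    nlinarith
  have hat : a ≤ 1 + t / 2 := by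
    nlinarith [ha2, hst, ht0.le, ha0.le]
  -- c₁ ≥ 2 / r
  have hsup : (1 - η n) ^ (-(1/2) : ℝ) ≤ ⨆ k, (1 - η k) ^ (-(1/2) : ℝ) :=
    le_ciSup hbdd n
  have hrpow : (1 - η n) ^ (-(1/2) : ℝ) = 1 / r := by
    rw [Real.rpow_neg hb.le, hrdef, hbdef, Real.sqrt_eq_rpow]
    exact (one_div _).symm
  have hc : 2 / r ≤ c₁ := by
    rw [hc₁]
    have := hsup
    rw [hrpow] at this
    have h2 : 2 * (1 / r) ≤ 2 * ⨆ k, (1 - η k) ^ (-(1/2) : ℝ) := by linarith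
    calc 2 / r = 2 * (1 / r) := by ring
    _ ≤ _ := h2
  have hc0 : 0 < c₁ := lt_of_lt_of_le (by positivity) hc
  have hUn : U n = b / a := by rw [hU n]
  clear_value s b a r t
  clear hsup hrpow hc₁ hbdd hU hZ hZn hmul hs hadef hrdef htdef hθ hγ
  constructor
  · -- lower bound
    rw [hUn, le_div_iff₀ ha0]
    -- (1 - c₁ * t) * a ≤ b
    have hca : 2 * t ≤ c₁ * t * a := by
      have h1 : 2 / r * t * r ≤ c₁ * t * r := by
        have := mul_le_mul_of_nonneg_right (mul_le_mul_of_nonneg_right hc ht0.le) hr0.le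
        linarith
      have h2 : 2 / r * t * r = 2 * t := by field_simp
      have h3 : c₁ * t * r ≤ c₁ * t * a := by
        have : 0 ≤ c₁ * t := by positivity
        nlinarith
      linarith
    have hexp : (1 - c₁ * t) * a = a - c₁ * t * a := by ring
    rw [hexp]
    linarith [hat, htη, hca, hbdef.ge]
  · rw [hUn, div_le_one ha0]
    linarith
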